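/- Let f : ℝ → ℂ be continuous and suppose that the linear span of all translates τ_y f, y ∈ ℝ (where τ_y f(x) = f(x+y)), is finite-dimensional. Then f is an exponential polynomial, i.e., f(x) = Σ_{j=1}^N P_j(x) exp(λ_j x) for some polynomials P_j ∈ ℂ[x] and scalars λ_j ∈ ℂ. -/

import Mathlib

open MeasureTheory intervalIntegral Module Polynomial

namespace Stmt6Aux

noncomputable section

def V (f : ℝ → ℂ) : Submodule ℂ (ℝ → ℂ) :=
  Submodule.span ℂ {g : ℝ → ℂ | ∃ y : ℝ, g = fun x => f (x + y)}

lemma translate_mem (f : ℝ → ℂ) (y : ℝ) : (fun x => f (x + y)) ∈ V f :=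
  Submodule.subset_span ⟨y, rfl⟩

lemma cont_of_mem (f : ℝ → ℂ) (hf : Continuous f) {g : ℝ → ℂ} (hg : g ∈ V f) :
    Continuous g := by
  induction hg using Submodule.span_induction with
  | mem g hgS => obtain ⟨y, rfl⟩ := hgS; exact hf.comp (continuous_add_right y)
  | zero => exact continuous_const
  | add g h _ _ hg hh => exact hg.add hh
  | smul c g _ hg => exact hg.const_smul c

def trL (y : ℝ) : (ℝ → ℂ) →ₗ[ℂ] (ℝ → ℂ) where
  toFun g := fun x => g (x + y)
  map_add' _ _ := rfl
  map_smul' _ _ := rfl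

lemma trL_mem (f : ℝ → ℂ) (y : ℝ) {g : ℝ → ℂ} (hg : g ∈ V f) : trL y g ∈ V f := by
  induction hg using Submodule.span_induction with
  | mem g hgS =>
    obtain ⟨z, rfl⟩ := hgS
    refine Submodule.subset_span ⟨y + z, ?_⟩
    funext x
    simp [trL, add_assoc]
  | zero => exact (V f).zero_mem
  | add g h _ _ hg hh => exact (V f).add_mem hg hh
  | smul c g _ hg => exact (V f).smul_mem c hg

def S (f : ℝ → ℂ) (y : ℝ) : V f →ₗ[ℂ] V f :=
  (trL y).restrict fun g hg => trL_mem f y hg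

def ev (f : ℝ → ℂ) (t : ℝ) : Module.Dual ℂ (V f) where
  toFun v := v.1 t
  map_add' _ _ := rfl
  map_smul' _ _ := rfl

def Lint (f : ℝ → ℂ) (hf : Continuous f) (s : ℝ) : Module.Dual ℂ (V f) where
  toFun v := ∫ t in (0:ℝ)..s, v.1 t
  map_add' u v := by
    exact intervalIntegral.integral_add
      ((cont_of_mem f hf u.2).intervalIntegrable _ _)
      ((cont_of_mem f hf v.2).intervalIntegrable _ _)
  map_smul' c v := by
    simpa using intervalIntegral.integral_smul c (fun t => v.1 t) (μ := volume) (a := 0) (b := s)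

def Tf (f : ℝ → ℂ) (y : ℝ) : V f := ⟨fun x => f (x + y), translate_mem f y⟩

lemma dual_mem_span_ev (f : ℝ → ℂ) [FiniteDimensional ℂ (V f)] (L : Module.Dual ℂ (V f)) :
    L ∈ Submodule.span ℂ (Set.range (ev f)) := by
  apply FiniteDimensional.mem_span_of_iInf_ker_le_ker
  intro v hv
  have hv0 : v = 0 := by
    apply Subtype.ext
    funext t
    exact (Submodule.mem_iInf _).1 hv t
  simp [hv0]

/-- For any dual functional `L`, the function `x ↦ L (τ_x f)` belongs to `V f`. -/
lemma funcV (f : ℝ → ℂ) [FiniteDimensional ℂ (V f)] (L : Module.Dual ℂ (V f)) :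
    (fun x => L (Tf f x)) ∈ V f := by
  induction dual_mem_span_ev f L using Submodule.span_induction with
  | mem L hLS =>
    obtain ⟨t, rfl⟩ := hLS
    have : (fun x => ev f t (Tf f x)) = fun x => f (x + t) := by
      funext x; exact congrArg f (add_comm t x)
    rw [this]; exact translate_mem f t
  | zero => exact (V f).zero_mem
  | add L M _ _ hL hM => exact (V f).add_mem hL hM
  | smul c L _ hL => exact (V f).smul_mem c hL

lemma ev0_mem_span_Lint (f : ℝ → ℂ) (hf : Continuous f) [FiniteDimensional ℂ (V f)] :
    ev f 0 ∈ Submodule.span ℂ (Set.range (Lint f hf)) := by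
  apply FiniteDimensional.mem_span_of_iInf_ker_le_ker
  intro v hv
  have hv0 : v = 0 := by
    apply Subtype.ext
    funext t
    have hvc := cont_of_mem f hf v.2
    have h1 : HasDerivAt (fun s => ∫ u in (0:ℝ)..s, v.1 u) (v.1 t) t :=
      integral_hasDerivAt_right (hvc.intervalIntegrable _ _)
        hvc.stronglyMeasurable.stronglyMeasurableAtFilter hvc.continuousAt
    have h2 : (fun s => ∫ u in (0:ℝ)..s, v.1 u) = fun _ => (0:ℂ) := by
      funext s
      exact (Submodule.mem_iInf _).1 hv s
    rw [h2] at h1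
    exact ((hasDerivAt_const t (0:ℂ)).unique h1).symm
  simp [hv0]

lemma exists_deriv (f : ℝ → ℂ) (hf : Continuous f) [FiniteDimensional ℂ (V f)] :
    ∃ Λ : Module.Dual ℂ (V f), ∀ x, HasDerivAt f (Λ (Tf f x)) x := by
  suffices h : ∀ L ∈ Submodule.span ℂ (Set.range (Lint f hf)), ∃ L' : Module.Dual ℂ (V f),
      ∀ x, HasDerivAt (fun t => L (Tf f t)) (L' (Tf f x)) x by
    obtain ⟨Λ, hΛ⟩ := h (ev f 0) (ev0_mem_span_Lint f hf)
    refine ⟨Λ, fun x => ?_⟩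
    refine (hΛ x).congr_of_eventuallyEq (Filter.Eventually.of_forall fun t => ?_)
    exact (congrArg f (zero_add t)).symm
  intro L hL
  induction hL using Submodule.span_induction with
  | mem L hLS =>
    obtain ⟨s, rfl⟩ := hLS
    refine ⟨ev f s - ev f 0, fun x => ?_⟩
    have hF : ∀ r : ℝ, HasDerivAt (fun r => ∫ u in (0:ℝ)..r, f u) (f r) r := fun r =>
      integral_hasDerivAt_right (hf.intervalIntegrable _ _)
        hf.stronglyMeasurable.stronglyMeasurableAtFilter hf.continuousAt
    have h1 : HasDerivAt (fun t : ℝ => ∫ u in (0:ℝ)..(s + t), f u) (f (s + x)) x := by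
      have hinner : HasDerivAt (fun t : ℝ => s + t) 1 x := by
        simpa using (hasDerivAt_id x).const_add s
      have := HasDerivAt.scomp x (hF (s + x)) hinner
      simp [Function.comp] at this; exact this
    have h2 := h1.sub (hF x)
    have heq : (fun t : ℝ => Lint f hf s (Tf f t))
        = fun t => (∫ u in (0:ℝ)..(s + t), f u) - ∫ u in (0:ℝ)..t, f u := by
      funext t
      show (∫ y in (0:ℝ)..s, f (y + t)) = _
      rw [intervalIntegral.integral_comp_add_right (fun u => f u) t, zero_add]
      have h3 := intervalIntegral.integral_add_adjacent_intervals (μ := volume)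
        (hf.intervalIntegrable 0 t) (hf.intervalIntegrable t (s + t))
      exact eq_sub_of_add_eq' h3
    rw [heq]
    convert h2 using 1
    show (Tf f x).1 s - (Tf f x).1 0 = _
    simp [Tf, zero_add]
    all_goals rfl
  | zero => exact ⟨0, fun x => by simpa using hasDerivAt_const x (0:ℂ)⟩
  | add L M _ _ ihL ihM =>
    obtain ⟨L', hL'⟩ := ihL; obtain ⟨M', hM'⟩ := ihM
    exact ⟨L' + M', fun x => by exact (hL' x).add (hM' x)⟩
  | smul c L _ ihL =>
    obtain ⟨L', hL'⟩ := ihL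
    exact ⟨c • L', fun x => by simpa using (hL' x).const_mul c⟩

end

end Stmt6Aux

namespace Part2
open Stmt6Aux

noncomputable section

variable (f : ℝ → ℂ) (hf : Continuous f) [FiniteDimensional ℂ (V f)]

def Lam : Module.Dual ℂ (V f) := (exists_deriv f hf).choose

lemma Lam_spec : ∀ x, HasDerivAt f (Lam f hf (Tf f x)) x := (exists_deriv f hf).choose_spec

lemma S_translate (x z : ℝ) (hg : (fun t => f (t + z)) ∈ V f) :
    S f x ⟨fun t => f (t + z), hg⟩ = Tf f (x + z) :=
  Subtype.ext (funext fun t => congrArg f (add_assoc t x z))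

def E0 : V f →ₗ[ℂ] (ℝ → ℂ) where
  toFun v := fun x => Lam f hf (S f x v)
  map_add' u v := by funext x; simp [map_add]
  map_smul' c v := by funext x; simp [_root_.map_smul]

lemma E0_mem (v : V f) : E0 f hf v ∈ V f := by
  obtain ⟨g, hg⟩ := v
  induction hg using Submodule.span_induction with
  | mem g hgS =>
    obtain ⟨z, rfl⟩ := hgS
    have heq : E0 f hf ⟨fun t => f (t + z), Submodule.subset_span ⟨z, rfl⟩⟩
        = trL z (fun x => Lam f hf (Tf f x)) := by
      funext x
      show Lam f hf (S f x ⟨fun t => f (t + z), _⟩) = _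
      exact congrArg (Lam f hf) (S_translate f x z _)
    rw [heq]
    exact trL_mem f z (funcV f (Lam f hf))
  | zero =>
    have : (⟨0, Submodule.zero_mem _⟩ : V f) = 0 := rfl
    rw [this, map_zero]; exact (V f).zero_mem
  | add g h hg hh ihg ihh =>
    have : (⟨g + h, Submodule.add_mem _ hg hh⟩ : V f) = ⟨g, hg⟩ + ⟨h, hh⟩ := rfl
    rw [this, map_add]; exact (V f).add_mem ihg ihh
  | smul c g hg ihg =>
    have : (⟨c • g, Submodule.smul_mem _ c hg⟩ : V f) = c • (⟨g, hg⟩ : V f) := rfl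
    rw [this, _root_.map_smul]; exact (V f).smul_mem c ihg

def Dend : Module.End ℂ (V f) := (E0 f hf).codRestrict (V f) (E0_mem f hf)

lemma hasDerivAt_mem : ∀ (v : V f) (x : ℝ),
    HasDerivAt (v : ℝ → ℂ) ((Dend f hf v : ℝ → ℂ) x) x := by
  rintro ⟨g, hg⟩ x
  show HasDerivAt g (Lam f hf (S f x ⟨g, hg⟩)) x
  induction hg using Submodule.span_induction with
  | mem g hgS =>
    obtain ⟨z, rfl⟩ := hgS
    rw [show (⟨fun t => f (t + z), Submodule.subset_span ⟨z, rfl⟩⟩ : V f)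
      = ⟨fun t => f (t + z), translate_mem f z⟩ from rfl, S_translate]
    have hinner : HasDerivAt (fun t : ℝ => t + z) 1 x := (hasDerivAt_id x).add_const z
    have := HasDerivAt.scomp x (Lam_spec f hf (x + z)) hinner
    simp [Function.comp] at this; exact this
  | zero =>
    have : (⟨0, Submodule.zero_mem _⟩ : V f) = 0 := rfl
    rw [this, map_zero, map_zero]
    exact hasDerivAt_const x (0:ℂ)
  | add g h hg hh ihg ihh =>
    have he : (⟨g + h, Submodule.add_mem _ hg hh⟩ : V f) = ⟨g, hg⟩ + ⟨h, hh⟩ := rfl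
    rw [he, map_add, map_add]
    exact ihg.add ihh
  | smul c g hg ihg =>
    have he : (⟨c • g, Submodule.smul_mem _ c hg⟩ : V f) = c • (⟨g, hg⟩ : V f) := rfl
    rw [he, _root_.map_smul, _root_.map_smul]
    exact ihg.const_smul c

end
end Part2

namespace Part3
open Stmt6Aux Part2

lemma exists_antideriv (q : Polynomial ℂ) : ∃ Q : Polynomial ℂ, Polynomial.derivative Q = q := by
  induction q using Polynomial.induction_on with
  | C a => exact ⟨Polynomial.C a * Polynomial.X, by simp⟩
  | add p q ihp ihq =>
    obtain ⟨P, hP⟩ := ihp; obtain ⟨Q, hQ⟩ := ihq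
    exact ⟨P + Q, by simp [hP, hQ]⟩
  | monomial n a _ =>
    refine ⟨Polynomial.C (a / (n + 2 : ℂ)) * Polynomial.X ^ (n + 2), ?_⟩
    rw [Polynomial.derivative_C_mul_X_pow]
    have hne : ((n : ℂ) + 2) ≠ 0 := by
      have : (0:ℝ) < (n:ℝ) + 2 := by positivity
      intro h
      have := congrArg Complex.re h
      simp at this
      norm_cast at this
    congr 1
    · push_cast
      rw [div_mul_cancel₀ _ hne]

variable (f : ℝ → ℂ) (hf : Continuous f) [FiniteDimensional ℂ (V f)]

lemma genEig_expPoly (μ : ℂ) : ∀ (m : ℕ) (v : V f),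
    (((Dend f hf) - μ • 1) ^ m) v = 0 →
    ∃ p : Polynomial ℂ, ∀ x : ℝ, (v : ℝ → ℂ) x = p.eval (x : ℂ) * Complex.exp (μ * x) := by
  intro m
  induction m with
  | zero =>
    intro v hv
    rw [pow_zero, Module.End.one_apply] at hv
    exact ⟨0, fun x => by simp [hv]⟩
  | succ m ih =>
    intro v hv
    set u := ((Dend f hf) - μ • 1) v with hu
    have hu0 : (((Dend f hf) - μ • 1) ^ m) u = 0 := by
      rw [hu, ← Module.End.mul_apply, ← pow_succ]
      exact hv
    obtain ⟨q, hq⟩ := ih u hu0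
    have hDv : ∀ x : ℝ, ((Dend f hf v : V f) : ℝ → ℂ) x = μ * (v : ℝ → ℂ) x + (u : ℝ → ℂ) x := by
      intro x
      have h1 : (Dend f hf) v = μ • v + u := by
        rw [hu, LinearMap.sub_apply, LinearMap.smul_apply, Module.End.one_apply]
        module
      rw [h1]
      simp
    have Hv : ∀ x : ℝ, HasDerivAt (v : ℝ → ℂ) (μ * (v : ℝ → ℂ) x + (u : ℝ → ℂ) x) x :=
      fun x => (hDv x) ▸ hasDerivAt_mem f hf v x
    obtain ⟨Q, hQ⟩ := exists_antideriv q
    set w : ℝ → ℂ := fun x : ℝ => Complex.exp (-(μ * x)) * (v : ℝ → ℂ) x with hw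
    have Hw : ∀ x : ℝ, HasDerivAt w (q.eval (x : ℂ)) x := by
      intro x
      have hlin : HasDerivAt (fun x : ℝ => -(μ * (x : ℂ))) (-μ) x := by
        have h2 : HasDerivAt (fun z : ℂ => -(μ * z)) (-μ) (x : ℂ) := by
          have h := ((hasDerivAt_id ((x : ℝ) : ℂ)).const_mul μ).neg
          simp at h; exact h
        exact h2.comp_ofReal
      have hexp := hlin.cexp
      have hprod := hexp.mul (Hv x)
      refine hprod.congr_deriv ?_
      rw [hq x]
      have hee : Complex.exp (-(μ * x)) * Complex.exp (μ * x) = 1 := by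
        rw [← Complex.exp_add]; simp
      have : Complex.exp (-(μ * x)) * -μ * (v : ℝ → ℂ) x
          + Complex.exp (-(μ * x)) * (μ * (v : ℝ → ℂ) x + q.eval (x : ℂ) * Complex.exp (μ * x))
          = (Complex.exp (-(μ * x)) * Complex.exp (μ * x)) * q.eval (x : ℂ) := by ring
      rw [this, hee, one_mul]
    have hQd : ∀ x : ℝ, HasDerivAt (fun x : ℝ => Q.eval (x : ℂ)) (q.eval (x : ℂ)) x := by
      intro x
      have h3 := (Polynomial.hasDerivAt Q ((x : ℝ) : ℂ)).comp_ofReal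
      rwa [hQ] at h3
    have hconst : ∀ x : ℝ, w x - Q.eval (x : ℂ) = w 0 - Q.eval (((0 : ℝ) : ℂ)) := by
      intro x
      have hg : ∀ y : ℝ, HasDerivAt (fun x : ℝ => w x - Q.eval (x : ℂ)) 0 y := fun y => by
        have h := (Hw y).sub (hQd y)
        simp at h; exact h
      exact is_const_of_deriv_eq_zero (fun y => (hg y).differentiableAt)
        (fun y => (hg y).deriv) x 0
    refine ⟨Q + Polynomial.C (w 0 - Q.eval (((0 : ℝ) : ℂ))), fun x => ?_⟩
    have h1 : w x = Q.eval (x : ℂ) + (w 0 - Q.eval (((0 : ℝ) : ℂ))) := by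
      have := hconst x; linear_combination this
    have h2 : (v : ℝ → ℂ) x = Complex.exp (μ * x) * w x := by
      rw [hw]
      show _ = Complex.exp (μ * x) * (Complex.exp (-(μ * x)) * _)
      rw [← mul_assoc, ← Complex.exp_add]
      simp
    rw [h2, h1]
    simp only [Polynomial.eval_add, Polynomial.eval_C]
    ring

end Part3

theorem stmt6 (f : ℝ → ℂ) (hf : Continuous f)
    (hfd : FiniteDimensional ℂ
      (Submodule.span ℂ {g : ℝ → ℂ | ∃ y : ℝ, g = fun x => f (x + y)})) :
    ∃ (N : ℕ) (P : Fin N → Polynomial ℂ) (lam : Fin N → ℂ),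
      ∀ x : ℝ, f x = ∑ j, (P j).eval (x : ℂ) * Complex.exp (lam j * x) := by
  classical
  haveI : FiniteDimensional ℂ (Stmt6Aux.V f) := hfd
  have hfV : f ∈ Stmt6Aux.V f :=
    Submodule.subset_span ⟨0, by funext x; rw [add_zero]⟩
  set D := Part2.Dend f hf with hD
  have htop := Module.End.iSup_maxGenEigenspace_eq_top D
  have hmem : (⟨f, hfV⟩ : Stmt6Aux.V f) ∈ ⨆ μ : ℂ, D.maxGenEigenspace μ := by
    rw [htop]; exact Submodule.mem_top
  rw [Submodule.mem_iSup_iff_exists_finsupp] at hmem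
  obtain ⟨d, hd, hsum⟩ := hmem
  have key : ∀ μ : ℂ, ∃ p : Polynomial ℂ,
      ∀ x : ℝ, ((d μ : Stmt6Aux.V f) : ℝ → ℂ) x = p.eval (x : ℂ) * Complex.exp (μ * x) := by
    intro μ
    obtain ⟨k, hk⟩ := (Module.End.mem_maxGenEigenspace D μ (d μ)).1 (hd μ)
    exact Part3.genEig_expPoly f hf μ k (d μ) hk
  choose p hp using key
  refine ⟨d.support.card, fun j => p ((d.support.equivFin.symm j) : ℂ),
    fun j => ((d.support.equivFin.symm j) : ℂ), fun x => ?_⟩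
  have hx : f x = ∑ μ ∈ d.support, ((d μ : Stmt6Aux.V f) : ℝ → ℂ) x := by
    have h3 := congrArg (fun v : Stmt6Aux.V f => (v : ℝ → ℂ) x) hsum
    simp only [Finsupp.sum] at h3
    rw [AddSubmonoidClass.coe_finset_sum, Finset.sum_apply] at h3
    exact h3.symm
  rw [hx, Finset.sum_congr rfl (fun μ _ => hp μ x)]
  rw [← Finset.sum_attach d.support (fun μ => (p μ).eval (x : ℂ) * Complex.exp (μ * x))]
  rw [← Finset.univ_eq_attach]
  exact (Equiv.sum_comp d.support.equivFin.symm
    (fun μ => (p μ.1).eval (x : ℂ) * Complex.exp (μ.1 * x))).symm
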